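/- Let L be a Lie algebra and {V_i : i ∈ I} a family of L-modules. The direct sum ⊕_{i∈I} V_i is a zero action determined (zad) L-module if and only if each V_i is zad. -/

import Mathlib

open DirectSum

/-- The subspace `L·V` of a Lie module, spanned by all `⁅x, v⁆`. -/
def lieActionSpan (F L V : Type*) [Field F] [LieRing L] [LieAlgebra F L]
    [AddCommGroup V] [Module F V] [LieRingModule L V] : Submodule F V :=
  Submodule.span F {z : V | ∃ (x : L) (v : V), ⁅x, v⁆ = z}

/-- A module `V` over a Lie algebra `L` is zero action determined (zad) if every bilinear
map `f : L × V → F` with `f(x,v) = 0` whenever `x·v = 0` factors through the action via a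
linear map `Φ : L·V → F`. -/
def IsZAD (F L V : Type*) [Field F] [LieRing L] [LieAlgebra F L]
    [AddCommGroup V] [Module F V] [LieRingModule L V] [LieModule F L V] : Prop :=
  ∀ f : L →ₗ[F] V →ₗ[F] F, (∀ (x : L) (v : V), ⁅x, v⁆ = 0 → f x v = 0) →
    ∃ Φ : lieActionSpan F L V →ₗ[F] F,
      ∀ (x : L) (v : V), f x v = Φ ⟨⁅x, v⁆, Submodule.subset_span ⟨x, v, rfl⟩⟩

section aux
variable (F L : Type*) (ι : Type*) (V : ι → Type*)
    [Field F] [LieRing L] [LieAlgebra F L] [DecidableEq ι]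
    [∀ i, AddCommGroup (V i)] [∀ i, Module F (V i)]
    [∀ i, LieRingModule L (V i)] [∀ i, LieModule F L (V i)]

omit [LieAlgebra F L] [∀ (i : ι), LieModule F L (V i)] in
lemma lie_lof (x : L) (i : ι) (v : V i) :
    ⁅x, lof F ι V i v⁆ = lof F ι V i ⁅x, v⁆ := by
  refine DFinsupp.ext fun j => ?_
  rw [DirectSum.lie_module_bracket_apply]
  simp only [lof_eq_of]
  rcases eq_or_ne i j with rfl|h
  · rw [DirectSum.of_eq_same, DirectSum.of_eq_same]
  · rw [DirectSum.of_eq_of_ne _ _ _ h.symm, DirectSum.of_eq_of_ne _ _ _ h.symm, lie_zero]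

omit [∀ (i : ι), LieModule F L (V i)] in
lemma lof_mem_span (i : ι) :
    ∀ v ∈ lieActionSpan F L (V i), lof F ι V i v ∈ lieActionSpan F L (⨁ j, V j) := by
  intro v hv
  have hle : lieActionSpan F L (V i) ≤
      (lieActionSpan F L (⨁ j, V j)).comap (lof F ι V i) := Submodule.span_le.mpr ?_
  exact hle hv
  rintro _ ⟨x, w, rfl⟩
  rw [SetLike.mem_coe, Submodule.mem_comap, ← lie_lof]
  exact Submodule.subset_span ⟨x, _, rfl⟩

end aux

/-- a direct sum of Lie modules is zero action determined if and only if every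
summand is. -/
theorem isZAD_directSum_iff (F L : Type*) (ι : Type*) (V : ι → Type*)
    [Field F] [LieRing L] [LieAlgebra F L] [DecidableEq ι]
    [∀ i, AddCommGroup (V i)] [∀ i, Module F (V i)]
    [∀ i, LieRingModule L (V i)] [∀ i, LieModule F L (V i)] :
    IsZAD F L (⨁ i, V i) ↔ ∀ i, IsZAD F L (V i) := by
  constructor
  · intro hzad i f hf
    obtain ⟨Φ, hΦ⟩ := hzad (f.compl₂ (DirectSum.component F ι V i))
      (by
        intro x w hw
        have : ⁅x, w i⁆ = 0 := by
          rw [← DirectSum.lie_module_bracket_apply, hw]; rfl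
        simpa [← DirectSum.apply_eq_component] using hf x (w i) this)
    refine ⟨Φ.comp ((lof F ι V i).restrict (lof_mem_span F L ι V i)), fun x v => ?_⟩
    have h1 := hΦ x (lof F ι V i v)
    simp only [LinearMap.compl₂_apply] at h1
    have h2 : (DirectSum.component F ι V i) (lof F ι V i v) = v := DirectSum.lof_apply F i v
    rw [h2] at h1
    rw [h1]
    simp only [LinearMap.comp_apply, LinearMap.restrict_apply]
    congr 1
    exact Subtype.ext (lie_lof F L ι V x i v)
  · intro h f hf
    choose Φi hΦi using fun i => h i (f.compl₂ (lof F ι V i))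
      (by
        intro x v hv
        have : ⁅x, lof F ι V i v⁆ = 0 := by rw [lie_lof, hv, map_zero]
        simpa using hf x (lof F ι V i v) this)
    choose Ψi hΨi using fun i => LinearMap.exists_extend (Φi i)
    set Ψ : (⨁ i, V i) →ₗ[F] F := DirectSum.toModule F ι F Ψi with hΨdef
    have key : ∀ (x : L) (v : ⨁ i, V i), f x v = Ψ ⁅x, v⁆ := by
      intro x
      suffices hs : f x = Ψ.comp (LieModule.toEnd F L (⨁ i, V i) x) by
        intro v; rw [hs]; rfl
      refine DirectSum.linearMap_ext F fun i => ?_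
      ext v
      simp only [LinearMap.comp_apply, LieModule.toEnd_apply_apply]
      rw [lie_lof, hΨdef, DirectSum.toModule_lof]
      have h1 := hΦi i x v
      simp only [LinearMap.compl₂_apply] at h1
      rw [h1]
      have h2 := LinearMap.congr_fun (hΨi i)
        (⟨⁅x, v⁆, Submodule.subset_span ⟨x, v, rfl⟩⟩ : lieActionSpan F L (V i))
      simpa using h2.symm
    exact ⟨Ψ.comp (lieActionSpan F L (⨁ i, V i)).subtype, fun x v => key x v⟩
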